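/- arXiv:2603.22141 — 4 statements merged into one kernel-verified Lean document; each statement's English description precedes it below -/
import Mathlib

section
/- Let φ: [0,2π] → ℝ be φ(θ) = min(θ/(2π), 1 − θ/(2π)), let r ∈ (0,1), N ≥ 1, and define f(θ) = (1/N + φ(θ))·r^{N φ(θ)}. Then for every nonzero integer m, the Fourier coefficient F_m = (1/2π)∫₀^{2π} f(θ) e^{−imθ} dθ satisfies |F_m| ≤ (2/(π² m²))·(1 + |log r|). -/
set_option maxHeartbeats 1000000

/-- The tent function `φ(θ) = min(θ/(2π), 1 − θ/(2π))`. -/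
noncomputable def tentφ (θ : ℝ) : ℝ := min (θ / (2 * Real.pi)) (1 - θ / (2 * Real.pi))

open Complex intervalIntegral

lemma aux_hasDerivAt (l A B : ℂ) (θ : ℝ) :
    HasDerivAt (fun t : ℝ => Complex.exp (l * t) * (A + B * t))
      (Complex.exp (l * θ) * (l * (A + B * θ) + B)) θ := by
  have h1 : HasDerivAt (fun t : ℝ => (t : ℂ)) 1 θ := by
    simpa using (hasDerivAt_id θ).ofReal_comp
  have h2 : HasDerivAt (fun t : ℝ => l * (t : ℂ)) l θ := by
    simpa using h1.const_mul l
  have h3 := h2.cexp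
  have h4 : HasDerivAt (fun t : ℝ => A + B * (t : ℂ)) B θ := by
    simpa using (h1.const_mul B).const_add A
  have h5 := h3.mul h4
  exact h5.congr_deriv (by ring)

lemma integral_linexp (l P Q : ℂ) (hl : l ≠ 0) (x y : ℝ) :
    ∫ t in x..y, Complex.exp (l * t) * (P + Q * t) =
      Complex.exp (l * y) * (P / l - Q / l ^ 2 + Q / l * y) -
        Complex.exp (l * x) * (P / l - Q / l ^ 2 + Q / l * x) := by
  apply intervalIntegral.integral_eq_sub_of_hasDerivAt
  · intro t ht
    have h := aux_hasDerivAt l (P / l - Q / l ^ 2) (Q / l) t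
    have he : Complex.exp (l * t) * (l * (P / l - Q / l ^ 2 + Q / l * t) + Q / l)
        = Complex.exp (l * t) * (P + Q * t) := by
      congr 1
      have e1 : l * (P / l) = P := by field_simp
      have e2 : l * (Q / l ^ 2) = Q / l := by
        field_simp
      have e3 : l * (Q / l) = Q := by field_simp
      calc l * (P / l - Q / l ^ 2 + Q / l * ↑t) + Q / l
          = l * (P / l) - l * (Q / l ^ 2) + (l * (Q / l)) * ↑t + Q / l := by ring
        _ = P + Q * ↑t := by rw [e1, e2, e3]; ring
    rwa [he] at h
  · apply Continuous.intervalIntegrable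
    fun_prop

/-- For `f(θ) = (1/N + φ(θ)) r^{N φ(θ)}` with `r ∈ (0,1)` and `N ≥ 1`, every Fourier
coefficient `F_m = (1/2π) ∫₀^{2π} f(θ) e^{−imθ} dθ` with `m ≠ 0` satisfies
`|F_m| ≤ (2/(π² m²)) (1 + |log r|)`. -/
theorem fourierCoeff_tent_bound (N : ℕ) (hN : 1 ≤ N) (r : ℝ) (hr0 : 0 < r) (hr1 : r < 1)
    (m : ℤ) (hm : m ≠ 0) :
    ‖(1 / (2 * Real.pi) : ℝ) •
        ∫ θ in (0:ℝ)..(2 * Real.pi),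
          (↑(((1 / N : ℝ) + tentφ θ) * r ^ ((N : ℝ) * tentφ θ)) : ℂ) *
            Complex.exp (-(Complex.I * (m : ℂ) * (θ : ℂ)))‖ ≤
      2 / (Real.pi ^ 2 * (m : ℝ) ^ 2) * (1 + |Real.log r|) := by
  have hπ : (0:ℝ) < Real.pi := Real.pi_pos
  set L := Real.log r with hLdef
  have hL0 : L < 0 := Real.log_neg hr0 hr1
  have hN0 : (0:ℝ) < N := by positivity
  set c : ℝ := L * N / (2 * Real.pi) with hcdef
  have hc0 : c < 0 := by
    apply div_neg_of_neg_of_pos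
    · exact mul_neg_of_neg_of_pos hL0 hN0
    · positivity
  set a : ℝ := 1 / N with hadef
  have ha0 : 0 < a := by positivity
  have ha1 : a ≤ 1 := by
    rw [hadef]
    rw [div_le_one hN0]
    exact_mod_cast hN
  set b : ℝ := 1 / (2 * Real.pi) with hbdef
  have hb0 : 0 < b := by positivity
  have hbpi : b * Real.pi = 1 / 2 := by
    rw [hbdef]
    field_simp
  -- tent on the two halves
  have htent1 : ∀ θ : ℝ, θ ≤ Real.pi → tentφ θ = b * θ := by
    intro θ hθ
    rw [tentφ, min_eq_left, hbdef]
    · ring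
    · rw [div_le_iff₀ (by positivity), sub_mul, div_mul_cancel₀ _ (by positivity : (2*Real.pi) ≠ 0)]
      nlinarith
  have htent2 : ∀ θ : ℝ, Real.pi ≤ θ → tentφ θ = 1 - b * θ := by
    intro θ hθ
    rw [tentφ, min_eq_right, hbdef]
    · ring
    · rw [sub_le_iff_le_add, ← add_div, le_div_iff₀ (by positivity)]
      nlinarith
  -- complex constants
  have hm' : (m:ℝ) ≠ 0 := Int.cast_ne_zero.2 hm
  set l1 : ℂ := (c:ℂ) - Complex.I * m with hl1def
  set l2 : ℂ := -(c:ℂ) - Complex.I * m with hl2def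
  have hl1 : l1 ≠ 0 := by
    intro h
    apply hm'
    have := congrArg Complex.im h
    simpa [hl1def] using this
  have hl2 : l2 ≠ 0 := by
    intro h
    apply hm'
    have := congrArg Complex.im h
    simpa [hl2def] using this
  set g : ℝ → ℂ := fun θ =>
    (↑(((1 / N : ℝ) + tentφ θ) * r ^ ((N : ℝ) * tentφ θ)) : ℂ) *
      Complex.exp (-(Complex.I * (m : ℂ) * (θ : ℂ))) with hgdef
  have hgc : Continuous g := by
    have hg2 : g = fun θ =>
        (↑(((1 / N : ℝ) + tentφ θ) * Real.exp (L * ((N:ℝ) * tentφ θ))) : ℂ) *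
          Complex.exp (-(Complex.I * (m : ℂ) * (θ : ℂ))) := by
      funext θ
      rw [hgdef]
      simp only [Real.rpow_def_of_pos hr0]
      rfl
    rw [hg2]
    have htc : Continuous tentφ := by
      unfold tentφ
      fun_prop
    fun_prop
  have key1 : ∀ θ ∈ Set.uIcc (0:ℝ) Real.pi,
      g θ = Complex.exp (l1 * θ) * ((a:ℂ) + (b:ℂ) * θ) := by
    intro θ hθ
    rw [Set.uIcc_of_le hπ.le] at hθ
    rw [hgdef]
    simp only
    rw [htent1 θ hθ.2, Real.rpow_def_of_pos hr0]
    have h1 : Real.log r * ((N:ℝ) * (b*θ)) = c * θ := by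
      rw [hcdef, hbdef]
      field_simp
      ring
    rw [h1]
    have h2 : (l1 * θ : ℂ) = ↑(c*θ) + -(Complex.I * m * θ) := by
      rw [hl1def]; push_cast; ring
    rw [h2, Complex.exp_add]
    rw [hadef]
    push_cast
    ring
  have key2 : ∀ θ ∈ Set.uIcc Real.pi (2*Real.pi),
      g θ = Complex.exp ((2*Real.pi*c : ℝ) : ℂ) *
        (Complex.exp (l2 * θ) * (((a:ℂ)+1) + (-(b:ℂ)) * θ)) := by
    intro θ hθ
    rw [Set.uIcc_of_le (by linarith)] at hθ
    rw [hgdef]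
    simp only
    rw [htent2 θ hθ.1, Real.rpow_def_of_pos hr0]
    have h1 : Real.log r * ((N:ℝ) * (1 - b*θ)) = 2*Real.pi*c + (-c * θ) := by
      rw [hcdef, hbdef]
      field_simp
      ring
    rw [h1]
    have h2 : (l2 * θ : ℂ) = ↑(-c*θ) + -(Complex.I * m * θ) := by
      rw [hl2def]; push_cast; ring
    rw [Real.exp_add, h2, Complex.exp_add, hadef]
    push_cast
    ring
  have hI1 : ∫ θ in (0:ℝ)..Real.pi, g θ =
      Complex.exp (l1 * Real.pi) * ((a:ℂ)/l1 - (b:ℂ)/l1^2 + (b:ℂ)/l1 * Real.pi) -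
        Complex.exp (l1 * (0:ℝ)) * ((a:ℂ)/l1 - (b:ℂ)/l1^2 + (b:ℂ)/l1 * (0:ℝ)) := by
    rw [intervalIntegral.integral_congr key1]
    exact integral_linexp l1 a b hl1 0 Real.pi
  have hI2 : ∫ θ in Real.pi..(2*Real.pi), g θ =
      Complex.exp ((2*Real.pi*c : ℝ) : ℂ) *
        (Complex.exp (l2 * (2*Real.pi)) * (((a:ℂ)+1)/l2 - (-(b:ℂ))/l2^2 + (-(b:ℂ))/l2 * (2*Real.pi)) -
          Complex.exp (l2 * Real.pi) * (((a:ℂ)+1)/l2 - (-(b:ℂ))/l2^2 + (-(b:ℂ))/l2 * Real.pi)) := by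
    rw [intervalIntegral.integral_congr key2, intervalIntegral.integral_const_mul,
      integral_linexp l2 ((a:ℂ)+1) (-(b:ℂ)) hl2 Real.pi (2*Real.pi)]
    push_cast
    ring
  have hsplit : ∫ θ in (0:ℝ)..(2*Real.pi), g θ =
      (∫ θ in (0:ℝ)..Real.pi, g θ) + ∫ θ in Real.pi..(2*Real.pi), g θ :=
    (intervalIntegral.integral_add_adjacent_intervals
      (hgc.intervalIntegrable _ _) (hgc.intervalIntegrable _ _)).symm
  norm_num at hI1
  set E : ℂ := Complex.exp (l1 * (Real.pi:ℝ)) with hEdef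
  have hπC : (Real.pi : ℂ) ≠ 0 := Complex.ofReal_ne_zero.2 Real.pi_ne_zero
  have hbC : (b : ℂ) ≠ 0 := Complex.ofReal_ne_zero.2 (ne_of_gt hb0)
  have h2bpi : (2:ℂ) * (b:ℂ) * (Real.pi:ℂ) = 1 := by
    have : ((2 * (b * Real.pi) : ℝ) : ℂ) = ((1:ℝ):ℂ) := by
      rw [hbpi]; norm_num
    push_cast at this
    linear_combination this
  have hprod2 : Complex.exp ((2*Real.pi*c:ℝ):ℂ) * Complex.exp (l2 * ((2:ℂ)*(Real.pi:ℂ))) = 1 := by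
    rw [← Complex.exp_add]
    have h : ((2*Real.pi*c:ℝ):ℂ) + l2 * ((2:ℂ)*(Real.pi:ℂ)) = ((-m:ℤ):ℂ) * (2*(Real.pi:ℂ)*Complex.I) := by
      rw [hl2def]; push_cast; ring
    rw [h, Complex.exp_int_mul_two_pi_mul_I]
  have hprod1 : Complex.exp ((2*Real.pi*c:ℝ):ℂ) * Complex.exp (l2 * (Real.pi:ℂ)) = E := by
    rw [hEdef, ← Complex.exp_add]
    congr 1
    rw [hl1def, hl2def]; push_cast; ring
  have hItot : (∫ θ in (0:ℝ)..(2*Real.pi), g θ) =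
      (E*((a:ℂ)+(b:ℂ)*(Real.pi:ℂ)) - (a:ℂ)) * ((1:ℂ)/l1 - 1/l2) +
        (1 - E) * (b:ℂ) * ((1:ℂ)/l1^2 + 1/l2^2) := by
    rw [mul_sub, ← mul_assoc (Complex.exp _), ← mul_assoc (Complex.exp _), hprod2, hprod1,
      one_mul] at hI2
    rw [hsplit, hI1, hI2]
    linear_combination ((E - 1)/l2) * h2bpi
  -- real quantities
  set D : ℝ := c^2 + (m:ℝ)^2 with hDdef
  have hm2 : (0:ℝ) < (m:ℝ)^2 := by
    rcases hm'.lt_or_gt with h|h <;> nlinarith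
  have hD0 : 0 < D := by nlinarith [sq_nonneg c]
  have hDm : (m:ℝ)^2 ≤ D := by nlinarith [sq_nonneg c]
  have hl1l2 : l1 * l2 = ((-D : ℝ) : ℂ) := by
    rw [hl1def, hl2def, hDdef]
    push_cast
    linear_combination ((m:ℂ)^2) * Complex.I_sq
  have hsub : (1:ℂ)/l1 - 1/l2 = ((2*c/D : ℝ) : ℂ) := by
    rw [div_sub_div _ _ hl1 hl2, hl1l2]
    have h1 : (1:ℂ)*l2 - l1*1 = ((-(2*c) : ℝ):ℂ) := by
      rw [hl1def, hl2def]; push_cast; ring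
    rw [h1, ← Complex.ofReal_div]
    congr 1
    rw [neg_div_neg_eq]
  have hsq : (1:ℂ)/l1^2 + 1/l2^2 = ((2*(c^2-(m:ℝ)^2)/D^2 : ℝ) : ℂ) := by
    rw [div_add_div _ _ (pow_ne_zero 2 hl1) (pow_ne_zero 2 hl2)]
    have h1 : (1:ℂ)*l2^2 + l1^2*1 = ((2*(c^2-(m:ℝ)^2):ℝ):ℂ) := by
      rw [hl1def, hl2def]; push_cast
      linear_combination 2*(m:ℂ)^2*Complex.I_sq
    have h2 : l1^2*l2^2 = ((D^2:ℝ):ℂ) := by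
      rw [← mul_pow, hl1l2]; push_cast; ring
    rw [h1, h2, ← Complex.ofReal_div]
  set AA := Real.exp (c*Real.pi) with hAAdef
  have hAA0 : 0 < AA := Real.exp_pos _
  have hAA1 : AA ≤ 1 := by
    rw [hAAdef]
    apply Real.exp_le_one_iff.2
    nlinarith
  have hEabs : ‖E‖ = AA := by
    rw [hEdef, Complex.norm_exp, hAAdef]
    congr 1
    rw [hl1def]
    simp [Complex.mul_re]
  -- exponential decay bound : AA * (-c) ≤ 1/(2π)
  have hxe : AA * (-c) ≤ 1/(2*Real.pi) := by
    have hx : 0 < -c*Real.pi := by nlinarith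
    have h1 : (-c*Real.pi) ≤ Real.exp (-c*Real.pi - 1) := by
      have := Real.add_one_le_exp (-c*Real.pi - 1)
      linarith
    have h3 : (2:ℝ) ≤ Real.exp 1 := by
      have := Real.add_one_le_exp (1:ℝ); linarith
    have h1' : (-c*Real.pi) * Real.exp 1 ≤ Real.exp (-c*Real.pi) := by
      rw [Real.exp_sub, le_div_iff₀ (Real.exp_pos 1)] at h1
      exact h1
    have h4 : 2*(-c*Real.pi) ≤ Real.exp (-c*Real.pi) := by nlinarith
    have h5 : AA * Real.exp (-c*Real.pi) = 1 := by
      rw [hAAdef, ← Real.exp_add]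
      norm_num
    rw [le_div_iff₀ (by positivity : (0:ℝ) < 2*Real.pi)]
    calc AA * -c * (2*Real.pi) = AA * (2*(-c*Real.pi)) := by ring
    _ ≤ AA * Real.exp (-c*Real.pi) := by
        apply mul_le_mul_of_nonneg_left h4 hAA0.le
    _ = 1 := h5
  have hacL : a * (-c) = |L| / (2*Real.pi) := by
    rw [abs_of_neg hL0, hadef, hcdef]
    field_simp
  -- assemble the bound
  have hfac1 : ‖E*((a:ℂ)+(b:ℂ)*(Real.pi:ℂ)) - (a:ℂ)‖ ≤ AA*(a+b*Real.pi) + a := by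
    have t1 : ‖(a:ℂ)‖ = a := by
      rw [Complex.norm_real, Real.norm_eq_abs, abs_of_pos ha0]
    have t2 : (a:ℂ)+(b:ℂ)*(Real.pi:ℂ) = ((a+b*Real.pi : ℝ):ℂ) := by push_cast; ring
    calc ‖E*((a:ℂ)+(b:ℂ)*(Real.pi:ℂ)) - (a:ℂ)‖
        ≤ ‖E*((a:ℂ)+(b:ℂ)*(Real.pi:ℂ))‖ + ‖(a:ℂ)‖ :=
          norm_sub_le _ _
      _ = AA * (a+b*Real.pi) + a := by
          rw [norm_mul, hEabs, t1, t2, Complex.norm_real, Real.norm_eq_abs, abs_of_pos (by positivity)]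
  have hfac2 : ‖(1 - E) * (b:ℂ)‖ ≤ 2 * b := by
    calc ‖(1 - E) * (b:ℂ)‖ = ‖1 - E‖ * b := by
          rw [norm_mul, Complex.norm_real, Real.norm_eq_abs, abs_of_pos hb0]
      _ ≤ 2 * b := by
          have : ‖1 - E‖ ≤ ‖(1:ℂ)‖ + ‖E‖ :=
            norm_sub_le _ _
          rw [hEabs, norm_one] at this
          nlinarith
  have habs1 : ‖((2*c/D : ℝ) : ℂ)‖ = 2*(-c)/D := by
    rw [Complex.norm_real, Real.norm_eq_abs, abs_div, abs_of_pos hD0]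
    congr 1
    rw [abs_of_neg (by nlinarith : 2*c < 0)]
    ring
  have habs2 : ‖((2*(c^2-(m:ℝ)^2)/D^2 : ℝ) : ℂ)‖ ≤ 2/D := by
    rw [Complex.norm_real, Real.norm_eq_abs, abs_div, abs_of_pos (by positivity : (0:ℝ) < D^2)]
    rw [div_le_div_iff₀ (by positivity) hD0]
    have : |2*(c^2-(m:ℝ)^2)| ≤ 2*D := by
      rw [abs_mul, abs_of_pos (by norm_num : (0:ℝ) < 2)]
      have h : |c^2-(m:ℝ)^2| ≤ D := by
        rw [abs_le, hDdef]
        constructor <;> nlinarith [sq_nonneg c]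
      nlinarith
    nlinarith [sq_nonneg D]
  have hItotabs : ‖∫ θ in (0:ℝ)..(2*Real.pi), g θ‖ ≤
      (AA*(a+b*Real.pi) + a) * (2*(-c)/D) + (2*b) * (2/D) := by
    rw [hItot, hsub, hsq]
    calc ‖(E*((a:ℂ)+(b:ℂ)*(Real.pi:ℂ)) - (a:ℂ)) * ((2*c/D : ℝ) : ℂ) +
          (1 - E) * (b:ℂ) * ((2*(c^2-(m:ℝ)^2)/D^2 : ℝ) : ℂ)‖
        ≤ ‖(E*((a:ℂ)+(b:ℂ)*(Real.pi:ℂ)) - (a:ℂ)) * ((2*c/D : ℝ) : ℂ)‖ +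
            ‖(1 - E) * (b:ℂ) * ((2*(c^2-(m:ℝ)^2)/D^2 : ℝ) : ℂ)‖ :=
          norm_add_le _ _
      _ ≤ (AA*(a+b*Real.pi) + a) * (2*(-c)/D) + (2*b) * (2/D) := by
          apply add_le_add
          · rw [norm_mul, habs1]
            apply mul_le_mul_of_nonneg_right hfac1
            apply div_nonneg (by nlinarith) hD0.le
          · rw [norm_mul]
            apply mul_le_mul hfac2 habs2 (norm_nonneg _) (by positivity)
  -- final numeric assembly
  clear_value L c a b l1 l2 g E D AA
  have hnc : (0:ℝ) < -c := by linarith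
  have habπ : a + b*Real.pi ≤ 3/2 := by rw [hbpi]; linarith
  have step1π : ((AA*(a+b*Real.pi) + a) * (2*(-c)) + (2*b)*2) * Real.pi ≤ 4*(1+|L|) := by
    have q1 : (AA*(-c))*Real.pi ≤ 1/2 := by
      have h0 := mul_le_mul_of_nonneg_right hxe hπ.le
      have h2 : 1/(2*Real.pi)*Real.pi = 1/2 := by
        field_simp
      rw [h2] at h0
      exact h0
    have q2 : (a*(-c))*Real.pi = |L|/2 := by
      rw [hacL]
      field_simp
    have p1 : (a+b*Real.pi)*((AA*(-c))*Real.pi) ≤ (3/2)*(1/2) := by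
      apply mul_le_mul habπ q1 (mul_nonneg (mul_nonneg hAA0.le hnc.le) hπ.le) (by norm_num)
    have hexp : ((AA*(a+b*Real.pi) + a) * (2*(-c)) + (2*b)*2) * Real.pi
        = 2*((a+b*Real.pi)*((AA*(-c))*Real.pi)) + 2*((a*(-c))*Real.pi) + 4*(b*Real.pi) := by
      ring
    rw [hbpi] at p1
    rw [hexp, q2, hbpi]
    linarith [p1, abs_nonneg L]
  have hWnn : (0:ℝ) ≤ (AA*(a+b*Real.pi) + a) * (2*(-c)) + (2*b)*2 := by
    have hbp : (0:ℝ) < b*Real.pi := mul_pos hb0 hπ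
    have hs : (0:ℝ) < a + b*Real.pi := by linarith
    have t1 : (0:ℝ) ≤ AA*(a+b*Real.pi) + a :=
      add_nonneg (mul_nonneg hAA0.le hs.le) ha0.le
    have t2 : (0:ℝ) ≤ 2*(-c) := by linarith
    have t3 : (0:ℝ) ≤ (2*b)*2 := by linarith
    exact add_nonneg (mul_nonneg t1 t2) t3
  rw [Complex.real_smul, norm_mul, Complex.norm_real, Real.norm_eq_abs, abs_of_pos hb0]
  have hfin : ((AA*(a+b*Real.pi) + a) * (2*(-c)) + (2*b)*2) * b * Real.pi^2 ≤ 2*(1+|L|) := by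
    have e : ((AA*(a+b*Real.pi) + a) * (2*(-c)) + (2*b)*2) * b * Real.pi^2
        = (((AA*(a+b*Real.pi) + a) * (2*(-c)) + (2*b)*2) * Real.pi) * (b*Real.pi) := by
      ring
    rw [hbpi] at step1π
    rw [e, hbpi]
    linarith [step1π]
  calc b * ‖∫ θ in (0:ℝ)..(2*Real.pi), g θ‖
      ≤ b * ((AA*(a+b*Real.pi) + a) * (2*(-c)/D) + (2*b) * (2/D)) :=
        mul_le_mul_of_nonneg_left hItotabs hb0.le
    _ = (((AA*(a+b*Real.pi) + a) * (2*(-c)) + (2*b)*2)/D) * b := by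
        ring
    _ ≤ (((AA*(a+b*Real.pi) + a) * (2*(-c)) + (2*b)*2)/(m:ℝ)^2) * b :=
        mul_le_mul_of_nonneg_right (div_le_div_of_nonneg_left hWnn hm2 hDm) hb0.le
    _ ≤ 2 / (Real.pi ^ 2 * (m : ℝ) ^ 2) * (1 + |L|) := by
        rw [div_mul_eq_mul_div, div_le_iff₀ hm2]
        have e2 : 2 / (Real.pi^2*(m:ℝ)^2) * (1+|L|) * (m:ℝ)^2 = 2*(1+|L|)/Real.pi^2 := by
          field_simp
        rw [e2, le_div_iff₀ (by positivity)]
        exact hfin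
end

section
/- Let n: ℝ → ℝ be L-Lipschitz and 2π-periodic, sampled at q_j = 2πj/N for j = −N/2,…,N/2−1, and let ñ(s) = (1/N)Σ_j e^{−i q_j s} n(q_j) be its discrete Fourier transform. Then Σ_{s=1}^{N−1} sin²(πs/N)·|ñ(s)|² ≤ π²L²/N². -/
open scoped Real

noncomputable def dftE (N : ℕ) (m : ℤ) : ℂ := Complex.exp (2 * π * Complex.I * m / N)

lemma dftE_add (N : ℕ) (m m' : ℤ) : dftE N (m + m') = dftE N m * dftE N m' := by
  rw [dftE, dftE, dftE, ← Complex.exp_add]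
  congr 1
  push_cast
  ring

lemma dftE_dvd (N : ℕ) (hN : 0 < N) (m : ℤ) (h : (N : ℤ) ∣ m) : dftE N m = 1 := by
  obtain ⟨t, rfl⟩ := h
  rw [dftE]
  have hNne : (N : ℂ) ≠ 0 := by exact_mod_cast hN.ne'
  have : 2 * (π : ℂ) * Complex.I * ((N : ℤ) * t : ℤ) / N = t * (2 * π * Complex.I) := by
    push_cast
    field_simp
  rw [this, Complex.exp_int_mul_two_pi_mul_I]

lemma dftE_eq_one_iff (N : ℕ) (hN : 0 < N) (m : ℤ) : dftE N m = 1 ↔ (N : ℤ) ∣ m := by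
  constructor
  · intro h
    rw [dftE, Complex.exp_eq_one_iff] at h
    obtain ⟨t, ht⟩ := h
    have hNne : (N : ℂ) ≠ 0 := by exact_mod_cast hN.ne'
    have hpi : (π : ℂ) ≠ 0 := by exact_mod_cast Real.pi_ne_zero
    have h2 : (2 : ℂ) * π * Complex.I ≠ 0 := by
      simp [Complex.I_ne_zero, hpi]
    have hm : (m : ℂ) = t * N := by
      have key : 2 * (π:ℂ) * Complex.I * m = 2 * (π:ℂ) * Complex.I * (t * N) := by
        field_simp at ht
        rw [ht]; ring
      exact mul_left_cancel₀ h2 key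
    have hm2 : m = t * N := by exact_mod_cast hm
    exact ⟨t, by rw [hm2]; ring⟩
  · exact dftE_dvd N hN m

lemma dftE_pow (N : ℕ) (m : ℤ) (s : ℕ) : dftE N m ^ s = dftE N (m * s) := by
  rw [dftE, dftE, ← Complex.exp_nat_mul]
  congr 1
  push_cast
  ring

lemma dftE_conj (N : ℕ) (m : ℤ) : (starRingEnd ℂ) (dftE N m) = dftE N (-m) := by
  rw [dftE, dftE, ← Complex.exp_conj]
  congr 1
  simp only [map_div₀, map_mul, Complex.conj_I, Complex.conj_ofReal, map_ofNat,
    map_intCast, map_natCast]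
  push_cast
  ring

/-- orthogonality of characters -/
lemma dftE_orth (N : ℕ) (hN : 0 < N) (m : ℤ) (hm : ¬ ((N:ℤ) ∣ m)) :
    ∑ s ∈ Finset.range N, dftE N (m * s) = 0 := by
  have h1 : dftE N m ≠ 1 := by
    rw [Ne, dftE_eq_one_iff N hN]
    exact hm
  have : ∑ s ∈ Finset.range N, dftE N (m * s) = ∑ s ∈ Finset.range N, dftE N m ^ s := by
    refine Finset.sum_congr rfl fun s _ => ?_
    rw [dftE_pow]
  rw [this, geom_sum_eq h1, dftE_pow, dftE_dvd N hN _ ⟨m, by ring⟩, sub_self, zero_div]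

lemma sum_Ico_consec (a b c : ℤ) (g : ℤ → ℂ) (h1 : a ≤ b) (h2 : b ≤ c) :
    (∑ j ∈ Finset.Ico a b, g j) + ∑ j ∈ Finset.Ico b c, g j = ∑ j ∈ Finset.Ico a c, g j := by
  rw [← Finset.sum_union (Finset.Ico_disjoint_Ico_consecutive a b c),
    Finset.Ico_union_Ico_eq_Ico h1 h2]

/-- sum of an `N`-periodic function over `N` consecutive integers -/
lemma sum_Ico_shift (N : ℕ) (g : ℤ → ℂ) (hg : ∀ j, g (j + N) = g j) (m : ℕ) (hm : m ≤ N) :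
    ∑ j ∈ Finset.Ico (-(m:ℤ)) ((N:ℤ) - m), g j = ∑ j ∈ Finset.Ico (0:ℤ) (N:ℤ), g j := by
  have hm' : (m:ℤ) ≤ N := by exact_mod_cast hm
  have h1 : (∑ j ∈ Finset.Ico (-(m:ℤ)) 0, g j) + ∑ j ∈ Finset.Ico (0:ℤ) ((N:ℤ) - m), g j
      = ∑ j ∈ Finset.Ico (-(m:ℤ)) ((N:ℤ) - m), g j :=
    sum_Ico_consec _ _ _ g (by omega) (by omega)
  have h2 : (∑ j ∈ Finset.Ico (0:ℤ) ((N:ℤ) - m), g j) + ∑ j ∈ Finset.Ico ((N:ℤ) - m) (N:ℤ), g j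
      = ∑ j ∈ Finset.Ico (0:ℤ) (N:ℤ), g j :=
    sum_Ico_consec _ _ _ g (by omega) (by omega)
  have h3 : ∑ j ∈ Finset.Ico ((N:ℤ) - m) (N:ℤ), g j = ∑ j ∈ Finset.Ico (-(m:ℤ)) 0, g j := by
    have hmap : (Finset.Ico (-(m:ℤ)) 0).map (addRightEmbedding (N:ℤ))
        = Finset.Ico ((N:ℤ) - m) (N:ℤ) := by
      rw [Finset.map_add_right_Ico]
      congr 1 <;> ring
    rw [← hmap, Finset.sum_map]
    exact Finset.sum_congr rfl fun j _ => hg j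
  rw [← h1, ← h2, h3]; ring

/-- Parseval-type bound for the discrete Fourier transform of a Lipschitz periodic
function: if `n` is `L`-Lipschitz and `2π`-periodic, sampled at `q_j = 2πj/N` for
`j = −N/2, …, N/2 − 1`, and `ñ(s) = (1/N) ∑_j e^{−i q_j s} n(q_j)`, then
`∑_{s=1}^{N−1} sin²(πs/N) |ñ(s)|² ≤ π² L² / N²`. -/
theorem dft_lipschitz_bound (N : ℕ) (hN : Even N) (hN0 : 0 < N) (L : ℝ) (hL : 0 ≤ L)
    (n : ℝ → ℝ)
    (hlip : ∀ x y : ℝ, |n x - n y| ≤ L * |x - y|)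
    (hper : Function.Periodic n (2 * π)) :
    ∑ s ∈ Finset.Ico 1 N,
        Real.sin (π * s / N) ^ 2 *
          ‖(1 / (N : ℂ)) *
            ∑ j ∈ Finset.Icc (-(N : ℤ) / 2) ((N : ℤ) / 2 - 1),
              Complex.exp (-(Complex.I * (2 * π * j / N : ℝ) * (s : ℂ))) *
                (n (2 * π * j / N) : ℂ)‖ ^ 2 ≤
      π ^ 2 * L ^ 2 / (N : ℝ) ^ 2 := by
  have hNR : (0:ℝ) < N := by exact_mod_cast hN0
  have hNne : (N:ℝ) ≠ 0 := hNR.ne'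
  -- the sampled values
  set a : ℤ → ℝ := fun j => n (2*π*j/N) with ha_def
  have ha : ∀ j : ℤ, a (j + N) = a j := by
    intro j
    have h1 : 2*π*((j:ℝ)+N)/N = 2*π*j/N + 2*π := by field_simp
    simp only [ha_def]
    push_cast
    rw [h1]
    exact hper _
  -- the finite differences
  set d : ℤ → ℝ := fun j => a (j+1) - a j with hd_def
  have hd : ∀ j : ℤ, |d j| ≤ 2*π*L/N := by
    intro j
    have h1 : 2*π*((j:ℝ)+1)/N - 2*π*j/N = 2*π/N := by field_simp; ring
    have e1 : ((j+1 : ℤ) : ℝ) = (j:ℝ)+1 := by push_cast; ring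
    have h2 : |d j| ≤ L * |2*π*((j:ℝ)+1)/N - 2*π*(j:ℝ)/N| := by
      simp only [hd_def, ha_def, e1]
      exact hlip _ _
    rw [h1] at h2
    rw [abs_of_pos (show (0:ℝ) < 2*π/N by positivity)] at h2
    calc |d j| ≤ L * (2*π/N) := h2
      _ = 2*π*L/N := by ring
  set F : ℕ → ℂ := fun s => ∑ j ∈ Finset.Ico (0:ℤ) (N:ℤ), dftE N (-(j*s)) * (a j : ℂ) with hF_def
  set D : ℕ → ℂ := fun s => ∑ j ∈ Finset.Ico (0:ℤ) (N:ℤ), dftE N (-(j*s)) * (d j : ℂ) with hD_def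
  -- Step A : identify the inner sum with F s
  have hinner : ∀ s : ℕ,
      (∑ j ∈ Finset.Icc (-(N : ℤ) / 2) ((N : ℤ) / 2 - 1),
        Complex.exp (-(Complex.I * (2 * π * j / N : ℝ) * (s : ℂ))) * (n (2 * π * j / N) : ℂ))
      = F s := by
    intro s
    obtain ⟨k, hk⟩ := hN
    have hk2 : N = 2*k := by omega
    have hs1 : Finset.Icc (-(N : ℤ) / 2) ((N : ℤ) / 2 - 1)
        = Finset.Ico (-(k:ℤ)) ((N:ℤ) - k) := by
      ext x
      simp only [Finset.mem_Icc, Finset.mem_Ico]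
      omega
    have hterm : ∀ j : ℤ,
        Complex.exp (-(Complex.I * (2 * π * j / N : ℝ) * (s : ℂ))) * (n (2 * π * j / N) : ℂ)
        = dftE N (-(j*s)) * (a j : ℂ) := by
      intro j
      congr 1
      rw [dftE]
      congr 1
      push_cast
      ring
    rw [hs1]
    calc ∑ j ∈ Finset.Ico (-(k:ℤ)) ((N:ℤ) - k),
          Complex.exp (-(Complex.I * (2 * π * j / N : ℝ) * (s : ℂ))) * (n (2 * π * j / N) : ℂ)
        = ∑ j ∈ Finset.Ico (-(k:ℤ)) ((N:ℤ) - k), dftE N (-(j*s)) * (a j : ℂ) :=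
          Finset.sum_congr rfl fun j _ => hterm j
      _ = F s := by
          refine sum_Ico_shift N _ ?_ k (by omega)
          intro j
          rw [ha]
          have : -((j + (N:ℤ))*s) = -(j*s) + (N:ℤ)*(-(s:ℤ)) := by ring
          rw [this, dftE_add, dftE_dvd N hN0 _ ⟨-(s:ℤ), rfl⟩, mul_one]
  -- Step C : D s = (E s - 1) * F s
  have hDF : ∀ s : ℕ, D s = (dftE N s - 1) * F s := by
    intro s
    have hperv : ∀ j : ℤ, dftE N (-((j + (N:ℤ))*s)) * (a (j + N + 1) : ℂ)
        = dftE N (-(j*s)) * (a (j+1) : ℂ) := by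
      intro j
      have h1 : -((j + (N:ℤ))*s) = -(j*s) + (N:ℤ)*(-(s:ℤ)) := by ring
      have h2 : j + (N:ℤ) + 1 = (j + 1) + (N:ℤ) := by ring
      rw [h1, dftE_add, dftE_dvd N hN0 _ ⟨-(s:ℤ), rfl⟩, mul_one, h2, ha]
    have hEF : dftE N s * F s = ∑ j ∈ Finset.Ico (0:ℤ) (N:ℤ), dftE N (-(j*s)) * (a (j+1) : ℂ) := by
      rw [hF_def, Finset.mul_sum]
      calc ∑ j ∈ Finset.Ico (0:ℤ) (N:ℤ), dftE N (s:ℤ) * (dftE N (-(j*s)) * (a j : ℂ))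
          = ∑ j ∈ Finset.Ico (0:ℤ) (N:ℤ), dftE N (-((j-1)*s)) * (a j : ℂ) := by
            refine Finset.sum_congr rfl fun j _ => ?_
            have : -((j-1)*(s:ℤ)) = (s:ℤ) + -(j*s) := by ring
            rw [this, dftE_add, mul_assoc]
        _ = ∑ j ∈ Finset.Ico (-1:ℤ) ((N:ℤ)-1), dftE N (-(j*s)) * (a (j+1) : ℂ) := by
            have hmap : (Finset.Ico (-1:ℤ) ((N:ℤ)-1)).map (addRightEmbedding (1:ℤ))
                = Finset.Ico (0:ℤ) (N:ℤ) := by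
              rw [Finset.map_add_right_Ico]
              congr 1 <;> ring
            rw [← hmap, Finset.sum_map]
            refine Finset.sum_congr rfl fun j _ => ?_
            simp only [addRightEmbedding_apply]
            rw [show j + 1 - 1 = j from by ring]
        _ = ∑ j ∈ Finset.Ico (0:ℤ) (N:ℤ), dftE N (-(j*s)) * (a (j+1) : ℂ) := by
            have := sum_Ico_shift N (fun j => dftE N (-(j*s)) * (a (j+1) : ℂ)) hperv 1 hN0
            simpa using this
    rw [sub_mul, one_mul, hEF, hD_def]
    rw [← Finset.sum_sub_distrib]
    refine Finset.sum_congr rfl fun j _ => ?_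
    rw [hd_def]
    push_cast
    ring
  -- Step E : |E s - 1|^2 = 4 sin^2(pi s / N)
  have hsin : ∀ s : ℕ, Complex.normSq (dftE N s - 1) = 4 * Real.sin (π*s/N)^2 := by
    intro s
    set θ : ℝ := 2*π*s/N with hθ_def
    have h1 : dftE N s - 1 = ((Real.cos θ - 1 : ℝ) : ℂ) + ((Real.sin θ : ℝ) : ℂ) * Complex.I := by
      have : dftE N (s:ℤ) = Complex.exp ((θ:ℂ) * Complex.I) := by
        rw [dftE]; congr 1; rw [hθ_def]; push_cast; ring
      rw [this, Complex.exp_mul_I, ← Complex.ofReal_cos, ← Complex.ofReal_sin]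
      push_cast
      ring
    rw [h1, Complex.normSq_add_mul_I]
    have h2 := Real.sin_sq_add_cos_sq θ
    have h3 := Real.sin_sq_eq_half_sub (π*s/N)
    have h4 : 2*(π*s/N) = θ := by rw [hθ_def]; ring
    rw [h4] at h3
    nlinarith
  -- Step D : Parseval
  have horth : ∀ j ∈ Finset.Ico (0:ℤ) (N:ℤ), ∀ k ∈ Finset.Ico (0:ℤ) (N:ℤ),
      ∑ s ∈ Finset.range N, dftE N ((k - j)*s) = if j = k then (N:ℂ) else 0 := by
    intro j hj k hk
    simp only [Finset.mem_Ico] at hj hk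
    by_cases hjk : j = k
    · subst hjk
      rw [if_pos rfl]
      have h0 : ∀ s ∈ Finset.range N, dftE N ((j - j)*s) = (1:ℂ) := by
        intro s _
        simp [dftE]
      rw [Finset.sum_congr rfl h0, Finset.sum_const, Finset.card_range]
      simp
    · rw [if_neg hjk]
      refine dftE_orth N hN0 _ ?_
      rintro ⟨t, ht⟩
      have h1 : |k - j| < N := abs_lt.mpr ⟨by omega, by omega⟩
      rw [ht, abs_mul, Int.abs_natCast] at h1
      have habs : |t| < 1 := by
        by_contra hc
        push_neg at hc
        have hNt : (N:ℤ) * 1 ≤ (N:ℤ) * |t| :=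
          mul_le_mul_of_nonneg_left hc (by positivity)
        omega
      have ht0 : t = 0 := by
        rcases abs_lt.mp habs with ⟨hl, hr⟩
        omega
      rw [ht0, mul_zero] at ht
      omega
  have hpars : ∑ s ∈ Finset.range N, (Complex.normSq (D s) : ℂ)
      = (N:ℂ) * ∑ j ∈ Finset.Ico (0:ℤ) (N:ℤ), ((d j : ℝ) : ℂ)^2 := by
    have key : ∀ s : ℕ, (Complex.normSq (D s) : ℂ)
        = ∑ j ∈ Finset.Ico (0:ℤ) (N:ℤ), ∑ k ∈ Finset.Ico (0:ℤ) (N:ℤ),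
            ((d j * d k : ℝ) : ℂ) * dftE N ((k - j)*s) := by
      intro s
      rw [← Complex.mul_conj, hD_def]
      rw [map_sum, Finset.sum_mul_sum]
      refine Finset.sum_congr rfl fun j _ => Finset.sum_congr rfl fun k _ => ?_
      rw [map_mul, dftE_conj, Complex.conj_ofReal]
      have : (k - j)*(s:ℤ) = -(j*s) + -(-(k*s)) := by ring
      rw [this, dftE_add]
      push_cast
      ring
    calc ∑ s ∈ Finset.range N, (Complex.normSq (D s) : ℂ)
        = ∑ s ∈ Finset.range N, ∑ j ∈ Finset.Ico (0:ℤ) (N:ℤ), ∑ k ∈ Finset.Ico (0:ℤ) (N:ℤ),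
            ((d j * d k : ℝ) : ℂ) * dftE N ((k - j)*s) :=
          Finset.sum_congr rfl fun s _ => key s
      _ = ∑ j ∈ Finset.Ico (0:ℤ) (N:ℤ), ∑ k ∈ Finset.Ico (0:ℤ) (N:ℤ),
            ((d j * d k : ℝ) : ℂ) * ∑ s ∈ Finset.range N, dftE N ((k - j)*s) := by
          rw [Finset.sum_comm]
          refine Finset.sum_congr rfl fun j _ => ?_
          rw [Finset.sum_comm]
          refine Finset.sum_congr rfl fun k _ => ?_
          rw [Finset.mul_sum]
      _ = ∑ j ∈ Finset.Ico (0:ℤ) (N:ℤ), ((d j * d j : ℝ) : ℂ) * N := by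
          refine Finset.sum_congr rfl fun j hj => ?_
          rw [Finset.sum_congr rfl fun k hk => by rw [horth j hj k hk]]
          simp only [mul_ite, mul_zero]
          rw [Finset.sum_ite_eq]
          simp [hj]
      _ = (N:ℂ) * ∑ j ∈ Finset.Ico (0:ℤ) (N:ℤ), ((d j : ℝ) : ℂ)^2 := by
          rw [Finset.mul_sum]
          refine Finset.sum_congr rfl fun j _ => ?_
          push_cast
          ring
  -- convert Parseval to the reals
  have hparsR : ∑ s ∈ Finset.range N, Complex.normSq (D s)
      = N * ∑ j ∈ Finset.Ico (0:ℤ) (N:ℤ), (d j)^2 := by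
    have h := hpars
    rw [show ((N:ℂ) * ∑ j ∈ Finset.Ico (0:ℤ) (N:ℤ), ((d j:ℝ):ℂ)^2)
        = (((N:ℝ) * ∑ j ∈ Finset.Ico (0:ℤ) (N:ℤ), (d j)^2 : ℝ) : ℂ) from by push_cast; ring] at h
    rw [show (∑ s ∈ Finset.range N, (Complex.normSq (D s) : ℂ))
        = ((∑ s ∈ Finset.range N, Complex.normSq (D s) : ℝ) : ℂ) from by push_cast; ring] at h
    exact_mod_cast h
  -- bound each squared difference
  have hcard : (Finset.Ico (0:ℤ) (N:ℤ)).card = N := by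
    rw [Int.card_Ico]
    simp
  have hsum_d : ∑ j ∈ Finset.Ico (0:ℤ) (N:ℤ), (d j)^2 ≤ N * (2*π*L/N)^2 := by
    calc ∑ j ∈ Finset.Ico (0:ℤ) (N:ℤ), (d j)^2
        ≤ ∑ j ∈ Finset.Ico (0:ℤ) (N:ℤ), (2*π*L/N)^2 := by
          refine Finset.sum_le_sum fun j _ => ?_
          have h1 := pow_le_pow_left₀ (abs_nonneg (d j)) (hd j) 2
          rwa [sq_abs] at h1
      _ = N * (2*π*L/N)^2 := by
          rw [Finset.sum_const, hcard, nsmul_eq_mul]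
  -- termwise identity
  have hstep : ∀ s : ℕ, Real.sin (π * s / N) ^ 2 * ‖(1 / (N : ℂ)) * F s‖ ^ 2
      = (1/(4*(N:ℝ)^2)) * Complex.normSq (D s) := by
    intro s
    have hone : Complex.normSq (1/(N:ℂ)) = (1/(N:ℝ)) * (1/(N:ℝ)) := by
      rw [show (1/(N:ℂ)) = ((1/(N:ℝ) : ℝ) : ℂ) from by push_cast; ring, Complex.normSq_ofReal]
    calc Real.sin (π * s / N) ^ 2 * ‖(1 / (N : ℂ)) * F s‖ ^ 2
        = Real.sin (π * s / N) ^ 2 * ((1/(N:ℝ)) * (1/(N:ℝ)) * Complex.normSq (F s)) := by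
          rw [Complex.sq_norm, Complex.normSq_mul, hone]
      _ = (1/(4*(N:ℝ)^2)) * ((4 * Real.sin (π * s / N) ^ 2) * Complex.normSq (F s)) := by
          field_simp
      _ = (1/(4*(N:ℝ)^2)) * Complex.normSq (D s) := by
          rw [hDF s, Complex.normSq_mul, hsin s]
  calc ∑ s ∈ Finset.Ico 1 N,
        Real.sin (π * s / N) ^ 2 *
          ‖(1 / (N : ℂ)) *
            ∑ j ∈ Finset.Icc (-(N : ℤ) / 2) ((N : ℤ) / 2 - 1),
              Complex.exp (-(Complex.I * (2 * π * j / N : ℝ) * (s : ℂ))) *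
                (n (2 * π * j / N) : ℂ)‖ ^ 2
      = ∑ s ∈ Finset.Ico 1 N, (1/(4*(N:ℝ)^2)) * Complex.normSq (D s) := by
        refine Finset.sum_congr rfl fun s _ => ?_
        rw [hinner s]
        exact hstep s
    _ ≤ ∑ s ∈ Finset.range N, (1/(4*(N:ℝ)^2)) * Complex.normSq (D s) := by
        refine Finset.sum_le_sum_of_subset_of_nonneg ?_ fun i _ _ => mul_nonneg (by positivity) (Complex.normSq_nonneg _)
        intro x hx
        simp only [Finset.mem_Ico, Finset.mem_range] at hx ⊢
        omega
    _ = (1/(4*(N:ℝ)^2)) * ∑ s ∈ Finset.range N, Complex.normSq (D s) := by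
        rw [Finset.mul_sum]
    _ = (1/(4*(N:ℝ)^2)) * ((N:ℝ) * ∑ j ∈ Finset.Ico (0:ℤ) (N:ℤ), (d j)^2) := by
        rw [hparsR]
    _ ≤ (1/(4*(N:ℝ)^2)) * ((N:ℝ) * ((N:ℝ) * (2*π*L/N)^2)) := by
        have h1 : (N:ℝ) * ∑ j ∈ Finset.Ico (0:ℤ) (N:ℤ), (d j)^2
            ≤ (N:ℝ) * ((N:ℝ) * (2*π*L/N)^2) :=
          mul_le_mul_of_nonneg_left hsum_d (by positivity)
        exact mul_le_mul_of_nonneg_left h1 (by positivity)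
    _ = π ^ 2 * L ^ 2 / (N : ℝ) ^ 2 := by
        field_simp
        ring
end

section
/- For even N ≥ 2 and r ∈ [0,1), Σ_{s=1}^{N−1} (1 − r^{1+d(s,0)})² / sin²(πs/N) ≤ (N²/2)·(ζ(2) − 2r·Li₂(r) + r²·Li₂(r²)), where d(s,0) = min(s, N−s). -/
open scoped Real

/-- For even `N ≥ 2` and `r ∈ [0,1)`,
`∑_{s=1}^{N−1} (1 − r^{1+d(s,0)})²/sin²(πs/N) ≤ (N²/2)(ζ(2) − 2r Li₂(r) + r² Li₂(r²))`,
where `d(s,0) = min(s, N−s)`, `ζ(2) = ∑_{m≥1} 1/m²` and `Li₂(x) = ∑_{m≥1} x^m/m²`. -/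
theorem sum_sin_sq_bound (N : ℕ) (hN : Even N) (hN2 : 2 ≤ N)
    (r : ℝ) (hr0 : 0 ≤ r) (hr1 : r < 1) :
    ∑ s ∈ Finset.Ico 1 N,
        (1 - r ^ (1 + min s (N - s))) ^ 2 / Real.sin (π * s / N) ^ 2 ≤
      ((N : ℝ) ^ 2 / 2) *
        ((∑' m : ℕ, 1 / ((m + 1 : ℝ)) ^ 2) -
          2 * r * (∑' m : ℕ, r ^ (m + 1) / ((m + 1 : ℝ)) ^ 2) +
          r ^ 2 * ∑' m : ℕ, (r ^ 2) ^ (m + 1) / ((m + 1 : ℝ)) ^ 2) := by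
  have hNpos : (0:ℝ) < N := by
    have : 0 < N := by omega
    exact_mod_cast this
  have hNne : (N:ℝ) ≠ 0 := ne_of_gt hNpos
  obtain ⟨K, hKN⟩ : ∃ K, N = 2 * K := by
    obtain ⟨k, hk⟩ := hN; exact ⟨k, by omega⟩
  have hK1 : 1 ≤ K := by omega
  set f : ℕ → ℝ := fun m => (1 - r ^ (1 + m)) ^ 2 / (m:ℝ) ^ 2 with hf
  have hfnonneg : ∀ m, 0 ≤ f m := fun m => by positivity
  -- Jordan's inequality
  have key : ∀ t : ℕ, 1 ≤ t → 2 * t ≤ N → 2 * (t:ℝ) / N ≤ Real.sin (π * t / N) := by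
    intro t ht1 ht2
    have htR : (2:ℝ) * t ≤ N := by exact_mod_cast ht2
    have hx0 : 0 ≤ π * t / N := by positivity
    have hx2 : π * t / N ≤ π / 2 := by
      rw [div_le_div_iff₀ hNpos two_pos]
      nlinarith [Real.pi_pos]
    have h := Real.mul_le_sin hx0 hx2
    have : 2 * (t:ℝ) / N = 2 / π * (π * t / N) := by
      field_simp
    linarith [this ▸ h, h]
  -- pointwise bound
  have hterm : ∀ s ∈ Finset.Ico 1 N,
      (1 - r ^ (1 + min s (N - s))) ^ 2 / Real.sin (π * s / N) ^ 2
        ≤ (N:ℝ)^2/4 * f (min s (N - s)) := by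
    intro s hs
    simp only [Finset.mem_Ico] at hs
    set m := min s (N - s) with hm
    have hm1 : 1 ≤ m := by omega
    have hm2 : 2 * m ≤ N := by omega
    have hmR : (0:ℝ) < m := by exact_mod_cast hm1
    have hsin : 2 * (m:ℝ) / N ≤ Real.sin (π * s / N) := by
      rcases le_or_gt s (N - s) with h | h
      · have hms : m = s := min_eq_left h
        rw [hms]
        exact key s hs.1 (by omega)
      · have hms : m = N - s := min_eq_right h.le
        have heq : Real.sin (π * s / N) = Real.sin (π * ((N - s : ℕ):ℝ) / N) := by
          rw [← Real.sin_pi_sub]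
          congr 1
          have hcast : ((N - s : ℕ):ℝ) = (N:ℝ) - s := by
            push_cast [Nat.cast_sub hs.2.le]; ring
          rw [hcast]
          field_simp
        rw [hms, heq]
        exact key (N - s) (by omega) (by omega)
    have hsinpos : 0 < Real.sin (π * s / N) := lt_of_lt_of_le (by positivity) hsin
    have hsq : (2 * (m:ℝ) / N)^2 ≤ Real.sin (π * s / N) ^ 2 :=
      pow_le_pow_left₀ (by positivity) hsin 2
    have hnum : (0:ℝ) ≤ (1 - r ^ (1 + m)) ^ 2 := by positivity
    have hb := div_le_div_of_nonneg_left hnum (by positivity : (0:ℝ) < (2 * (m:ℝ) / N)^2) hsq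
    calc (1 - r ^ (1 + m)) ^ 2 / Real.sin (π * s / N) ^ 2
        ≤ (1 - r ^ (1 + m)) ^ 2 / (2 * (m:ℝ) / N)^2 := hb
      _ = (N:ℝ)^2/4 * f m := by
          rw [hf]
          field_simp
          ring
  -- sum manipulation
  have hsplit : ∑ s ∈ Finset.Ico 1 N, f (min s (N - s))
      ≤ 2 * ∑ m ∈ Finset.Ico 1 (K + 1), f m := by
    have h1 : (1:ℕ) ≤ K + 1 := by omega
    have h2 : K + 1 ≤ N := by omega
    rw [← Finset.sum_Ico_consecutive _ h1 h2]
    have e1 : ∑ s ∈ Finset.Ico 1 (K + 1), f (min s (N - s))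
        = ∑ s ∈ Finset.Ico 1 (K + 1), f s := by
      refine Finset.sum_congr rfl fun s hs => ?_
      simp only [Finset.mem_Ico] at hs
      congr 1
      omega
    have e2 : ∑ s ∈ Finset.Ico (K + 1) N, f (min s (N - s))
        = ∑ t ∈ Finset.Ico 1 K, f t := by
      refine Finset.sum_nbij' (fun s => N - s) (fun t => N - t) ?_ ?_ ?_ ?_ ?_
      · intro s hs; simp only [Finset.mem_Ico] at *; omega
      · intro t ht; simp only [Finset.mem_Ico] at *; omega
      · intro s hs; simp only [Finset.mem_Ico] at hs; omega
      · intro t ht; simp only [Finset.mem_Ico] at ht; omega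
      · intro s hs; simp only [Finset.mem_Ico] at hs
        congr 1
        omega
    rw [e1, e2]
    have e3 : ∑ t ∈ Finset.Ico 1 K, f t ≤ ∑ m ∈ Finset.Ico 1 (K + 1), f m := by
      refine Finset.sum_le_sum_of_subset_of_nonneg ?_ fun i _ _ => hfnonneg i
      exact Finset.Ico_subset_Ico le_rfl (by omega)
    linarith
  -- summability facts
  have hS1 : Summable (fun j : ℕ => 1 / ((j:ℝ) + 1) ^ 2) := by
    have h := Real.summable_one_div_nat_pow.mpr (le_refl 2)
    have h2 := (summable_nat_add_iff 1).mpr h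
    refine h2.congr fun j => ?_
    push_cast
    ring
  have hr2 : r ^ 2 < 1 := by nlinarith
  have hr20 : 0 ≤ r ^ 2 := by positivity
  have hS2 : Summable (fun j : ℕ => r ^ (j + 1) / ((j:ℝ) + 1) ^ 2) := by
    refine Summable.of_nonneg_of_le (fun j => by positivity) (fun j => ?_) hS1
    gcongr
    exact pow_le_one₀ hr0 hr1.le
  have hS3 : Summable (fun j : ℕ => (r ^ 2) ^ (j + 1) / ((j:ℝ) + 1) ^ 2) := by
    refine Summable.of_nonneg_of_le (fun j => by positivity) (fun j => ?_) hS1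
    gcongr
    exact pow_le_one₀ hr20 hr2.le
  -- the combined tail function
  set g : ℕ → ℝ := fun j => (1 - r ^ (j + 2)) ^ 2 / ((j:ℝ) + 1) ^ 2 with hg
  have hgexp : ∀ j : ℕ, g j = 1 / ((j:ℝ) + 1) ^ 2
      - 2 * r * (r ^ (j + 1) / ((j:ℝ) + 1) ^ 2)
      + r ^ 2 * ((r ^ 2) ^ (j + 1) / ((j:ℝ) + 1) ^ 2) := by
    intro j
    have hj : ((j:ℝ) + 1) ^ 2 ≠ 0 := by positivity
    rw [hg]
    field_simp
    ring
  have hgS : Summable g := by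
    refine ((hS1.sub (hS2.mul_left (2 * r))).add (hS3.mul_left (r ^ 2))).congr fun j => ?_
    rw [hgexp j]
  have htsum : ∑' j, g j =
      (∑' m : ℕ, 1 / ((m + 1 : ℝ)) ^ 2) -
        2 * r * (∑' m : ℕ, r ^ (m + 1) / ((m + 1 : ℝ)) ^ 2) +
        r ^ 2 * ∑' m : ℕ, (r ^ 2) ^ (m + 1) / ((m + 1 : ℝ)) ^ 2 := by
    rw [tsum_congr hgexp, Summable.tsum_add (hS1.sub (hS2.mul_left (2 * r))) (hS3.mul_left (r ^ 2)),
      Summable.tsum_sub hS1 (hS2.mul_left (2 * r)), tsum_mul_left, tsum_mul_left]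
  -- partial sum ≤ tsum
  have hpart : ∑ m ∈ Finset.Ico 1 (K + 1), f m ≤ ∑' j, g j := by
    rw [Finset.sum_Ico_eq_sum_range]
    have e : ∀ i ∈ Finset.range (K + 1 - 1), f (1 + i) = g i := by
      intro i _
      rw [hf, hg]
      push_cast
      ring_nf
    rw [Finset.sum_congr rfl e]
    exact Summable.sum_le_tsum _ (fun i _ => by positivity) hgS
  -- assemble
  calc ∑ s ∈ Finset.Ico 1 N,
        (1 - r ^ (1 + min s (N - s))) ^ 2 / Real.sin (π * s / N) ^ 2
      ≤ ∑ s ∈ Finset.Ico 1 N, (N:ℝ)^2/4 * f (min s (N - s)) :=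
        Finset.sum_le_sum hterm
    _ = (N:ℝ)^2/4 * ∑ s ∈ Finset.Ico 1 N, f (min s (N - s)) := by
        rw [Finset.mul_sum]
    _ ≤ (N:ℝ)^2/4 * (2 * ∑ m ∈ Finset.Ico 1 (K + 1), f m) := by
        apply mul_le_mul_of_nonneg_left hsplit (by positivity)
    _ ≤ (N:ℝ)^2/4 * (2 * ∑' j, g j) := by
        apply mul_le_mul_of_nonneg_left (by linarith) (by positivity)
    _ = ((N : ℝ) ^ 2 / 2) * (∑' j, g j) := by ring
    _ = _ := by rw [htsum]
end

section
/- For every λ > 0 and P ∈ ℝ with λ² + P² ≠ 0: ∫₀^{2π} dθ / (λ − iP cos θ)² = 2πλ/(λ² + P²)^{3/2}. -/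
open scoped Real
open Complex Metric

/-- For `λ > 0` and `P ∈ ℝ` with `λ² + P² ≠ 0`,
`∫₀^{2π} dθ/(λ − iP cos θ)² = 2πλ/(λ² + P²)^{3/2}`. -/
theorem integral_inv_sq_sub_cos (lam P : ℝ) (hlam : 0 < lam) (h : lam ^ 2 + P ^ 2 ≠ 0) :
    ∫ θ in (0:ℝ)..(2 * π),
        1 / ((lam : ℂ) - Complex.I * (P : ℂ) * Real.cos θ) ^ 2 =
      ((2 * π * lam / (lam ^ 2 + P ^ 2) ^ ((3 : ℝ) / 2) : ℝ) : ℂ) := by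
  rcases eq_or_ne P 0 with rfl | hP
  · have hlam' : (lam : ℂ) ≠ 0 := by exact_mod_cast hlam.ne'
    have hrp : (lam ^ 2 + (0:ℝ) ^ 2) ^ ((3:ℝ)/2) = lam ^ 3 := by
      rw [show lam ^ 2 + (0:ℝ)^2 = lam ^ 2 by ring, ← Real.rpow_natCast lam 2,
        ← Real.rpow_mul hlam.le, ← Real.rpow_natCast lam 3]
      norm_num
    simp only [Complex.ofReal_zero, mul_zero, zero_mul, sub_zero]
    rw [intervalIntegral.integral_const, hrp]
    rw [sub_zero, Complex.real_smul]
    have hlam3 : lam ^ 3 ≠ 0 := by positivity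
    push_cast
    field_simp
  · have hs : (0:ℝ) < lam ^ 2 + P ^ 2 := by positivity
    set c : ℝ := Real.sqrt (lam ^ 2 + P ^ 2) with hcdef
    have hc2 : c ^ 2 = lam ^ 2 + P ^ 2 := Real.sq_sqrt hs.le
    have hcpos : 0 < c := Real.sqrt_pos.mpr hs
    have hPabs : 0 < |P| := abs_pos.mpr hP
    have hclam : lam < c := by nlinarith [_root_.sq_abs P]
    have hcub : c - lam < |P| := by nlinarith [_root_.sq_abs P]
    have hclb : |P| < c + lam := by nlinarith [_root_.sq_abs P]
    set A : ℂ := (((c - lam)/P : ℝ) : ℂ) * Complex.I with hAdef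
    set B : ℂ := ((-((c + lam)/P) : ℝ) : ℂ) * Complex.I with hBdef
    have hPc : (P : ℂ) ≠ 0 := by exact_mod_cast hP
    have hcC : ((c:ℂ))^2 = (lam:ℂ)^2 + (P:ℂ)^2 := by exact_mod_cast hc2
    have hAabs : ‖A‖ < 1 := by
      rw [hAdef, norm_mul, Complex.norm_I, mul_one, Complex.norm_real, Real.norm_eq_abs, abs_div,
        _root_.abs_of_nonneg (by linarith : (0:ℝ) ≤ c - lam), div_lt_one hPabs]
      exact hcub
    have hBabs : 1 < ‖B‖ := by
      rw [hBdef, norm_mul, Complex.norm_I, mul_one, Complex.norm_real, Real.norm_eq_abs, abs_neg, abs_div,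
        _root_.abs_of_nonneg (by linarith : (0:ℝ) ≤ c + lam), lt_div_iff₀ hPabs, one_mul]
      exact hclb
    have hAB1 : A * B = 1 := by
      rw [hAdef, hBdef]
      push_cast
      field_simp
      linear_combination ((lam:ℂ)^2 - (c:ℂ)^2) * Complex.I_sq + hcC
    have hAB2 : (P:ℂ) * (A + B) = -2 * Complex.I * lam := by
      rw [hAdef, hBdef]
      push_cast
      field_simp
      ring
    have hAmB : (P:ℂ) * (A - B) = 2 * (c:ℂ) * Complex.I := by
      rw [hAdef, hBdef]
      push_cast
      field_simp
      ring
    set g : ℂ → ℂ := fun z => 4 * Complex.I * z / ((P:ℂ)^2 * (z - B)^2) with hgdef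
    have hAne : ∀ z : ℂ, ‖z‖ = 1 → z - A ≠ 0 := by
      intro z hz hzero
      rw [sub_eq_zero] at hzero
      rw [hzero] at hz
      exact absurd hz (ne_of_lt hAabs)
    have hBne : ∀ z : ℂ, ‖z‖ ≤ 1 → z - B ≠ 0 := by
      intro z hz hzero
      rw [sub_eq_zero] at hzero
      rw [hzero] at hz
      exact absurd hz (not_le.mpr hBabs)
    -- Cauchy formula for the derivative
    have hsub : closedBall (0:ℂ) 1 ⊆ ({B}ᶜ : Set ℂ) := by
      intro z hz
      simp only [Set.mem_compl_iff, Set.mem_singleton_iff]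
      intro hzB
      rw [mem_closedBall_zero_iff, hzB] at hz
      exact absurd hz (not_le.mpr hBabs)
    have hg : DifferentiableOn ℂ g ({B}ᶜ : Set ℂ) := by
      intro z hz
      apply DifferentiableAt.differentiableWithinAt
      apply DifferentiableAt.div
      · fun_prop
      · fun_prop
      · have hzB : z - B ≠ 0 := sub_ne_zero.mpr hz
        exact mul_ne_zero (pow_ne_zero _ hPc) (pow_ne_zero _ hzB)
    have hAmem : A ∈ ball (0:ℂ) 1 := by
      rw [mem_ball_zero_iff]; exact hAabs
    have key := Complex.two_pi_I_inv_smul_circleIntegral_sub_sq_inv_smul_of_differentiable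
      isOpen_compl_singleton hsub hg hAmem
    -- derivative value
    have hABne : A - B ≠ 0 := by
      intro h0
      apply Complex.I_ne_zero
      have : (P:ℂ) * (A - B) = 0 := by rw [h0, mul_zero]
      rw [hAmB] at this
      have hcne : ((c:ℝ):ℂ) ≠ 0 := by exact_mod_cast hcpos.ne'
      field_simp at this
      simpa [hcne] using this
    have hcne : ((c:ℝ):ℂ) ≠ 0 := by exact_mod_cast hcpos.ne'
    have hder : HasDerivAt g (-Complex.I * lam / (c:ℂ)^3) A := by
      have h1 : HasDerivAt (fun z : ℂ => 4 * Complex.I * z) (4 * Complex.I) A := by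
        simpa using (hasDerivAt_id A).const_mul (4 * Complex.I)
      have h2 : HasDerivAt (fun z : ℂ => (P:ℂ)^2 * (z - B)^2)
          ((P:ℂ)^2 * (2 * (A - B))) A := by
        have := (((hasDerivAt_id A).sub_const B).pow 2).const_mul ((P:ℂ)^2)
        simpa using this
      have hden : (P:ℂ)^2 * (A - B)^2 ≠ 0 :=
        mul_ne_zero (pow_ne_zero _ hPc) (pow_ne_zero _ hABne)
      have h3 := h1.div h2 hden
      have hc3 : ((c:ℝ):ℂ)^3 ≠ 0 := pow_ne_zero _ hcne
      have hden2 : (((P:ℂ)^2 * (A - B)^2)^2 : ℂ) ≠ 0 := pow_ne_zero _ hden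
      have k1 : (P:ℂ) * A = (((c:ℝ):ℂ) - lam) * Complex.I := by
        rw [hAdef]; push_cast; field_simp
      refine h3.congr_deriv (Eq.symm ?_)
      rw [div_eq_div_iff hc3 hden2]
      linear_combination (-(4*Complex.I*((c:ℝ):ℂ)^3*((P:ℂ)*(A-B)+2*((c:ℝ):ℂ)*Complex.I)
          - 8*Complex.I*((c:ℝ):ℂ)^3*(((c:ℝ):ℂ)-(lam:ℂ))*Complex.I
          + Complex.I*(lam:ℂ)*((P:ℂ)*(A-B)+2*((c:ℝ):ℂ)*Complex.I)
            * (((P:ℂ)*(A-B))^2+(2*((c:ℝ):ℂ)*Complex.I)^2))) * hAmB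
        + (8*Complex.I*((c:ℝ):ℂ)^3*((P:ℂ)*(A-B))) * k1
        + (-(16*((c:ℝ):ℂ)^5*Complex.I - 16*((c:ℝ):ℂ)^4*(((c:ℝ):ℂ)-(lam:ℂ))*Complex.I
          + 16*(lam:ℂ)*((c:ℝ):ℂ)^4*(Complex.I^3 - Complex.I))) * Complex.I_sq
    -- the circle integral equals the interval integral
    have hint : (∮ z in C(0,1), ((z - A)^2)⁻¹ • g z)
        = ∫ θ in (0:ℝ)..(2*π), 1 / ((lam : ℂ) - Complex.I * (P : ℂ) * Real.cos θ) ^ 2 := by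
      unfold circleIntegral
      refine intervalIntegral.integral_congr fun θ _ => ?_
      set z : ℂ := Complex.exp (θ * Complex.I) with hzdef
      have hzmap : circleMap 0 1 θ = z := by simp [circleMap, hzdef]
      have habsz : ‖z‖ = 1 := Complex.norm_exp_ofReal_mul_I θ
      have hz0 : z ≠ 0 := Complex.exp_ne_zero _
      have hzA : z - A ≠ 0 := hAne z habsz
      have hzB : z - B ≠ 0 := hBne z habsz.le
      have hdenne : (lam : ℂ) - Complex.I * (P : ℂ) * (Real.cos θ : ℂ) ≠ 0 := by
        intro h0
        have h1 := congrArg Complex.re h0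
        simp [Complex.sub_re, Complex.mul_re, Complex.mul_im] at h1
        exact hlam.ne' h1
      have hcos : ((Real.cos θ : ℝ) : ℂ) * (2 * z) = z ^ 2 + 1 := by
        rw [Complex.ofReal_cos, Complex.cos, hzdef, neg_mul, Complex.exp_neg]
        field_simp [Complex.exp_ne_zero]
      have H : ((lam : ℂ) - Complex.I * (P : ℂ) * (Real.cos θ : ℂ)) * (2 * z)
          = (-Complex.I * (P:ℂ)) * ((z - A) * (z - B)) := by
        linear_combination (-Complex.I*(P:ℂ)) * hcos + (-Complex.I*z) * hAB2
          + (Complex.I*(P:ℂ)) * hAB1 + (2*(lam:ℂ)*z) * Complex.I_sq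
      have hinv : (1:ℂ) / ((lam : ℂ) - Complex.I * (P : ℂ) * (Real.cos θ : ℂ))^2
          = (2*z)^2 / ((-Complex.I * (P:ℂ)) * ((z - A) * (z - B)))^2 := by
        have h2z : (2:ℂ) * z ≠ 0 := mul_ne_zero two_ne_zero hz0
        rw [← H, mul_pow ((lam : ℂ) - Complex.I * (P:ℂ) * (Real.cos θ : ℂ)) (2*z) 2,
          div_mul_eq_div_div_swap, div_self (pow_ne_zero 2 h2z)]
      rw [deriv_circleMap, hzmap, hinv]
      simp only [smul_eq_mul, hgdef]
      clear_value A B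
      field_simp
      linear_combination (4*(Complex.I^2 - 1)) * Complex.I_sq
    have h2pi : (2 * (π:ℝ) * Complex.I : ℂ) ≠ 0 := by
      simp [Real.pi_ne_zero, Complex.I_ne_zero]
    rw [hder.deriv, inv_smul_eq_iff₀ h2pi] at key
    rw [← hint, key, smul_eq_mul]
    -- numeric evaluation
    have hrp : (lam ^ 2 + P ^ 2) ^ ((3:ℝ)/2) = c ^ 3 := by
      rw [hcdef, Real.sqrt_eq_rpow, ← Real.rpow_natCast ((lam^2+P^2) ^ ((1:ℝ)/2)) 3,
        ← Real.rpow_mul hs.le]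
      norm_num
    rw [hrp]
    have hc3 : ((c:ℝ):ℂ)^3 ≠ 0 := pow_ne_zero _ hcne
    push_cast
    field_simp
    linear_combination (-(lam:ℂ)) * Complex.I_sq
end
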